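/- arXiv:2207.10534 — 2 statements merged into one kernel-verified Lean document; each statement's English description precedes it below -/
import Mathlib

section
/- Let P be a property and M1, M2 be communicating programs such that the alphabets αP, αM1 and αM2 contain no constraints. Then the weakest assumption A_w with respect to M1, M2 and P, with language L(A_w) = { w ∈ (αM2)* : M1 || w ⊨ P }, is regular. -/
/-!
Communicating programs (Frenkel, Grumberg, Păsăreanu, Sheinvald:
"Assume, Guarantee or Repair").

A communicating program is an automaton over an action alphabet consisting of
communication actions (reads `g?x`, writes `g!x`, and synchronized read/write
pairs), assignments `x := e`, and first-order constraints over valuations of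
the program variables.
-/

open scoped Classical

namespace AGR

/-- A single (one-sided) communication action: a read `g?x` or a write `g!x`
of variable `x` over channel `g`. -/
inductive CommAct (Chan Var : Type) where
  | read  : Chan → Var → CommAct Chan Var
  | write : Chan → Var → CommAct Chan Var

namespace CommAct

variable {Chan Var : Type}

/-- The channel of a communication action. -/
def chan : CommAct Chan Var → Chan
  | read g _ => g
  | write g _ => g

/-- The variable of a communication action. -/
def var : CommAct Chan Var → Var
  | read _ x => x
  | write _ x => x

end CommAct

/-- Two one-sided communication actions form a matching read/write pair:
one is a read and the other is a write, over the same channel. -/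
def rwPair {Chan Var : Type} : CommAct Chan Var → CommAct Chan Var → Prop
  | CommAct.read g _, CommAct.write g' _ => g = g'
  | CommAct.write g _, CommAct.read g' _ => g = g'
  | _, _ => False

/-- Letters of the action alphabet of a communicating program over channels
`Chan`, variables `Var` and data domain `D`:
communication actions (single reads/writes and synchronized pairs),
assignments `x := e`, and constraints (sets of valuations). -/
inductive Action (Chan Var D : Type) where
  | comm   : CommAct Chan Var → Action Chan Var D
  | sync   : CommAct Chan Var → CommAct Chan Var → Action Chan Var D
  | assign : Var → ((Var → D) → D) → Action Chan Var D
  | constr : Set (Var → D) → Action Chan Var D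

namespace Action

variable {Chan Var D : Type}

/-- `a` is a communication action (a single read/write or a synchronized pair). -/
def isComm : Action Chan Var D → Prop
  | comm _ => True
  | sync _ _ => True
  | _ => False

/-- `a` is an assignment. -/
def isAssign : Action Chan Var D → Prop
  | assign _ _ => True
  | _ => False

/-- `a` is a constraint. -/
def isConstraint : Action Chan Var D → Prop
  | constr _ => True
  | _ => False

/-- The channels occurring in an action. -/
def chans : Action Chan Var D → Set Chan
  | comm c => {c.chan}
  | sync c₁ c₂ => {c₁.chan, c₂.chan}
  | _ => ∅

/-- The action refers only to variables in `V`. -/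
def usesOnly (V : Set Var) : Action Chan Var D → Prop
  | comm c => c.var ∈ V
  | sync c₁ c₂ => c₁.var ∈ V ∧ c₂.var ∈ V
  | assign x e => x ∈ V ∧ ∀ β β' : Var → D, (∀ y ∈ V, β y = β' y) → e β = e β'
  | constr c => ∀ β β' : Var → D, (∀ y ∈ V, β y = β' y) → (β ∈ c ↔ β' ∈ c)

/-- The semantics of a single action on valuations:
`a.step β β'` holds when valuation `β'` may follow valuation `β` upon
performing `a`.  A read assigns an arbitrary value to the read variable;
a write changes nothing; a synchronized pair copies the written variable to
the read variable; an assignment updates the assigned variable; a constraint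
leaves the valuation unchanged and must be satisfied by it. -/
def step : Action Chan Var D → (Var → D) → (Var → D) → Prop
  | comm (CommAct.read _ x) => fun β β' => ∀ y, y ≠ x → β' y = β y
  | comm (CommAct.write _ _) => fun β β' => β' = β
  | sync (CommAct.read _ x) (CommAct.write _ y) => fun β β' =>
      β' x = β y ∧ ∀ z, z ≠ x → β' z = β z
  | sync (CommAct.write _ y) (CommAct.read _ x) => fun β β' =>
      β' x = β y ∧ ∀ z, z ≠ x → β' z = β z
  | sync _ _ => fun β β' => β' = β
  | assign x e => fun β β' => β' x = e β ∧ ∀ y, y ≠ x → β' y = β y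
  | constr c => fun β β' => β' = β ∧ β ∈ c

end Action

/-- `Exec β t β'` : the trace `t` has an execution starting in valuation `β`
and ending in valuation `β'`. -/
inductive Exec {Chan Var D : Type} :
    (Var → D) → List (Action Chan Var D) → (Var → D) → Prop where
  | nil (β : Var → D) : Exec β [] β
  | cons {β β' β'' : Var → D} {a : Action Chan Var D} {t : List (Action Chan Var D)} :
      a.step β β' → Exec β' t β'' → Exec β (a :: t) β''

/-- A trace is feasible if it has an execution. -/
def Feasible {Chan Var D : Type} (t : List (Action Chan Var D)) : Prop :=
  ∃ β β' : Var → D, Exec β t β'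

/-- Restriction of a single letter to a sub-alphabet `A`: letters in `A` are
kept; a synchronized pair (that is not itself in `A`) whose read or write
component is in `A` is replaced by that component; all other letters are
dropped. -/
noncomputable def restrictLetter {Chan Var D : Type} (A : Set (Action Chan Var D)) :
    Action Chan Var D → Option (Action Chan Var D)
  | Action.sync c₁ c₂ =>
      if Action.sync c₁ c₂ ∈ A then some (Action.sync c₁ c₂)
      else if Action.comm c₁ ∈ A then some (Action.comm c₁)
      else if Action.comm c₂ ∈ A then some (Action.comm c₂)
      else none
  | a => if a ∈ A then some a else none

/-- The restriction `t↓A` of a trace `t` to a sub-alphabet `A`. -/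
noncomputable def restrict {Chan Var D : Type} (A : Set (Action Chan Var D))
    (t : List (Action Chan Var D)) : List (Action Chan Var D) :=
  t.filterMap (restrictLetter A)

/-- A communicating program: states `Q` with an initial state, a transition
relation labeled by actions, a set of accepting states, an action alphabet,
and a set of program variables. -/
structure Program (Q Chan Var D : Type) where
  init : Q
  tr : Q → Action Chan Var D → Q → Prop
  acc : Set Q
  alph : Set (Action Chan Var D)
  vars : Set Var

namespace Program

variable {Q Chan Var D : Type}

/-- Well-formedness of a communicating program: transitions are labeled by
alphabet letters, alphabet letters refer only to the program variables, and
the alphabet and the variable set are finite. -/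
def Good (M : Program Q Chan Var D) : Prop :=
  (∀ q a q', M.tr q a q' → a ∈ M.alph) ∧
  (∀ a ∈ M.alph, a.usesOnly M.vars) ∧
  M.alph.Finite ∧ M.vars.Finite

/-- `M.Reach q t` : there is a run of `M` from the initial state to `q`
whose induced trace is `t`. -/
inductive Reach (M : Program Q Chan Var D) : Q → List (Action Chan Var D) → Prop where
  | nil : Reach M M.init []
  | snoc {q : Q} {t : List (Action Chan Var D)} {a : Action Chan Var D} {q' : Q} :
      Reach M q t → M.tr q a q' → Reach M q' (t ++ [a])

/-- `t` is a trace of `M` (induced by some run of `M`). -/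
def IsTrace (M : Program Q Chan Var D) (t : List (Action Chan Var D)) : Prop :=
  ∃ q : Q, M.Reach q t

/-- `T(M)`: the set of accepted traces of `M`. -/
def AccTraces (M : Program Q Chan Var D) : Set (List (Action Chan Var D)) :=
  {t | ∃ q ∈ M.acc, M.Reach q t}

/-- The set of channels occurring in actions of `M`. -/
def channels (M : Program Q Chan Var D) : Set Chan :=
  ⋃ a ∈ M.alph, a.chans

end Program

/-- The interface alphabet of `M₁` and `M₂`: all single communication actions
over channels common to both components. -/
def interface {Q₁ Q₂ Chan Var D : Type}
    (M₁ : Program Q₁ Chan Var D) (M₂ : Program Q₂ Chan Var D) :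
    Set (Action Chan Var D) :=
  {a | ∃ c : CommAct Chan Var, a = Action.comm c ∧
      c.chan ∈ M₁.channels ∧ c.chan ∈ M₂.channels}

/-- Transitions of the parallel composition `M₁ ‖ M₂`.  The two components
synchronize on matching read/write interface actions (moving through an
intermediate primed state from which the equality constraint between the two
involved variables is taken), and interleave on all other actions. -/
inductive ParTrans {Q₁ Q₂ Chan Var D : Type}
    (M₁ : Program Q₁ Chan Var D) (M₂ : Program Q₂ Chan Var D) :
    ((Q₁ × Q₂) ⊕ (Q₁ × Q₂ × Var × Var)) → Action Chan Var D →
    ((Q₁ × Q₂) ⊕ (Q₁ × Q₂ × Var × Var)) → Prop where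
  | sync {q₁ p₁ : Q₁} {q₂ p₂ : Q₂} {c₁ c₂ : CommAct Chan Var} :
      Action.comm c₁ ∈ M₁.alph → Action.comm c₁ ∈ interface M₁ M₂ →
      Action.comm c₂ ∈ M₂.alph → Action.comm c₂ ∈ interface M₁ M₂ →
      rwPair c₁ c₂ →
      M₁.tr q₁ (Action.comm c₁) p₁ → M₂.tr q₂ (Action.comm c₂) p₂ →
      ParTrans M₁ M₂ (Sum.inl (q₁, q₂)) (Action.sync c₁ c₂)
        (Sum.inr (p₁, p₂, c₁.var, c₂.var))
  | eqc {p₁ : Q₁} {p₂ : Q₂} {x₁ x₂ : Var} :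
      ParTrans M₁ M₂ (Sum.inr (p₁, p₂, x₁, x₂))
        (Action.constr {β | β x₁ = β x₂}) (Sum.inl (p₁, p₂))
  | left {q₁ p₁ : Q₁} {q₂ : Q₂} {a : Action Chan Var D} :
      a ∈ M₁.alph → a ∉ interface M₁ M₂ → M₁.tr q₁ a p₁ →
      ParTrans M₁ M₂ (Sum.inl (q₁, q₂)) a (Sum.inl (p₁, q₂))
  | right {q₁ : Q₁} {q₂ p₂ : Q₂} {a : Action Chan Var D} :
      a ∈ M₂.alph → a ∉ interface M₁ M₂ → M₂.tr q₂ a p₂ →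
      ParTrans M₁ M₂ (Sum.inl (q₁, q₂)) a (Sum.inl (q₁, p₂))

/-- The parallel composition `M₁ ‖ M₂` of two communicating programs. -/
def parallel {Q₁ Q₂ Chan Var D : Type}
    (M₁ : Program Q₁ Chan Var D) (M₂ : Program Q₂ Chan Var D) :
    Program ((Q₁ × Q₂) ⊕ (Q₁ × Q₂ × Var × Var)) Chan Var D where
  init := Sum.inl (M₁.init, M₂.init)
  tr := ParTrans M₁ M₂
  acc := {s | ∃ q₁ ∈ M₁.acc, ∃ q₂ ∈ M₂.acc, s = Sum.inl (q₁, q₂)}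
  alph :=
    {a | ∃ c₁ c₂ : CommAct Chan Var, a = Action.sync c₁ c₂ ∧
        Action.comm c₁ ∈ M₁.alph ∧ Action.comm c₁ ∈ interface M₁ M₂ ∧
        Action.comm c₂ ∈ M₂.alph ∧ Action.comm c₂ ∈ interface M₁ M₂ ∧
        rwPair c₁ c₂}
    ∪ ((M₁.alph ∪ M₂.alph) \ interface M₁ M₂)
    ∪ {a | ∃ x₁ ∈ M₁.vars, ∃ x₂ ∈ M₂.vars, a = Action.constr {β | β x₁ = β x₂}}
  vars := M₁.vars ∪ M₂.vars

/-- The interface of `M` and a property `P`: the communication actions common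
to both alphabets. -/
def cInterface {QM QP Chan Var D : Type}
    (M : Program QM Chan Var D) (P : Program QP Chan Var D) :
    Set (Action Chan Var D) :=
  {a | a.isComm ∧ a ∈ M.alph ∧ a ∈ P.alph}

/-- Transitions of the conjunctive composition `M × P`: the components
synchronize on common communication actions and interleave on all other
actions. -/
inductive ConjTrans {QM QP Chan Var D : Type}
    (M : Program QM Chan Var D) (P : Program QP Chan Var D) :
    QM × QP → Action Chan Var D → QM × QP → Prop where
  | sync {q₁ p₁ : QM} {q₂ p₂ : QP} {a : Action Chan Var D} :
      a ∈ cInterface M P → M.tr q₁ a p₁ → P.tr q₂ a p₂ →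
      ConjTrans M P (q₁, q₂) a (p₁, p₂)
  | left {q₁ p₁ : QM} {q₂ : QP} {a : Action Chan Var D} :
      a ∈ M.alph → a ∉ cInterface M P → M.tr q₁ a p₁ →
      ConjTrans M P (q₁, q₂) a (p₁, q₂)
  | right {q₁ : QM} {q₂ p₂ : QP} {a : Action Chan Var D} :
      a ∈ P.alph → a ∉ cInterface M P → P.tr q₂ a p₂ →
      ConjTrans M P (q₁, q₂) a (q₁, p₂)

/-- The conjunctive composition `M × P` of a program and a property; its
accepting states are pairs of an accepting state of `M` and a rejecting
(non-accepting) state of `P`. -/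
def conj {QM QP Chan Var D : Type}
    (M : Program QM Chan Var D) (P : Program QP Chan Var D) :
    Program (QM × QP) Chan Var D where
  init := (M.init, P.init)
  tr := ConjTrans M P
  acc := {s | s.1 ∈ M.acc ∧ s.2 ∉ P.acc}
  alph := M.alph ∪ P.alph
  vars := M.vars

/-- `P` is a property: a deterministic and complete communicating program
without assignment actions.  Semantic determinism: distinct constraints
leaving a state towards distinct successors are mutually contradictory.
Semantic completeness: whenever some constraint leaves a state, the
constraints leaving that state cover all valuations. -/
structure IsProperty {Q Chan Var D : Type} (P : Program Q Chan Var D) : Prop where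
  no_assign : ∀ a ∈ P.alph, ¬ a.isAssign
  complete : ∀ q : Q, ∀ a ∈ P.alph, ∃ q' : Q, P.tr q a q'
  deterministic : ∀ (q : Q) (a : Action Chan Var D) (q' q'' : Q),
      P.tr q a q' → P.tr q a q'' → q' = q''
  sem_det : ∀ (q : Q) (c₁ c₂ : Set (Var → D)) (q' q'' : Q),
      P.tr q (Action.constr c₁) q' → P.tr q (Action.constr c₂) q'' →
      c₁ ≠ c₂ → q' ≠ q'' → c₁ ∩ c₂ = ∅
  sem_complete : ∀ q : Q, (∃ (c : Set (Var → D)) (q' : Q), P.tr q (Action.constr c) q') →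
      ∀ β : Var → D, ∃ (c : Set (Var → D)) (q' : Q), P.tr q (Action.constr c) q' ∧ β ∈ c

/-- `M ⊨ P` : the conjunctive composition `M × P` has no feasible accepted
trace. -/
def Sat {QM QP Chan Var D : Type}
    (M : Program QM Chan Var D) (P : Program QP Chan Var D) : Prop :=
  ∀ t ∈ (conj M P).AccTraces, ¬ Feasible t

/-- `M_w`: the communicating program that follows exactly the trace `w` and
has no other transitions. -/
def traceProgram {Chan Var D : Type} (w : List (Action Chan Var D)) :
    Program (Fin (w.length + 1)) Chan Var D where
  init := 0
  tr := fun i a j => ∃ h : (i : ℕ) < w.length, a = w.get ⟨(i : ℕ), h⟩ ∧ (j : ℕ) = (i : ℕ) + 1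
  acc := {Fin.last w.length}
  alph := {a | a ∈ w}
  vars := Set.univ

/-- A language of finite words is regular if it is the language of some
finite (deterministic) automaton. -/
def IsRegularLang {A : Type} (L : Set (List A)) : Prop :=
  ∃ (σ : Type) (_ : Fintype σ) (M : DFA A σ), ∀ w : List A, w ∈ M.accepts ↔ w ∈ L

section WeakestRegAux

open Relation

variable {Q₁ Q₂ QP Chan Var D : Type}

private theorem WRfinite_subsets {α : Type} {s : Set α} (hs : s.Finite) :
    Finite {t : Set α // t ⊆ s} := by
  have : Finite ↥s := hs.to_subtype
  apply Finite.of_injective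
    (fun t : {t : Set α // t ⊆ s} => ((fun x : ↥s => (x : α)) ⁻¹' t.1 : Set ↥s))
  rintro ⟨t₁, ht₁⟩ ⟨t₂, ht₂⟩ h
  simp only at h
  apply Subtype.ext
  ext x
  constructor
  · intro hx
    have hxs : x ∈ s := ht₁ hx
    have : (⟨x, hxs⟩ : ↥s) ∈ (fun x : ↥s => (x : α)) ⁻¹' t₂ := by
      rw [← h]; exact hx
    exact this
  · intro hx
    have hxs : x ∈ s := ht₂ hx
    have : (⟨x, hxs⟩ : ↥s) ∈ (fun x : ↥s => (x : α)) ⁻¹' t₁ := by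
      rw [h]; exact hx
    exact this

private theorem WRchans_finite (a : Action Chan Var D) : a.chans.Finite := by
  cases a with
  | comm c => exact Set.finite_singleton _
  | sync c₁ c₂ => exact (Set.finite_singleton _).insert _
  | assign x e => exact Set.finite_empty
  | constr c => exact Set.finite_empty

private theorem WRchannels_finite {Q : Type} (M : Program Q Chan Var D)
    (h : M.alph.Finite) : M.channels.Finite :=
  h.biUnion fun a _ => WRchans_finite a

private theorem WRstep_sat (a : Action Chan Var D) (hna : ¬ a.isConstraint) (β : Var → D) :
    ∃ β', a.step β β' := by
  cases a with
  | comm c =>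
    cases c with
    | read g x => exact ⟨β, fun y _ => rfl⟩
    | write g x => exact ⟨β, rfl⟩
  | sync c₁ c₂ =>
    cases c₁ with
    | read g x =>
      cases c₂ with
      | write g' y =>
        refine ⟨Function.update β x (β y), ?_, ?_⟩
        · simp
        · intro z hz; simp [Function.update_of_ne hz]
      | read g' y => exact ⟨β, rfl⟩
    | write g x =>
      cases c₂ with
      | read g' y =>
        refine ⟨Function.update β y (β x), ?_, ?_⟩
        · simp
        · intro z hz; simp [Function.update_of_ne hz]
      | write g' y => exact ⟨β, rfl⟩
  | assign x e =>
    refine ⟨Function.update β x (e β), ?_, ?_⟩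
    · simp
    · intro z hz; simp [Function.update_of_ne hz]
  | constr c => exact absurd trivial hna

private theorem WRsync_sat {c₁ c₂ : CommAct Chan Var} (h : rwPair c₁ c₂) (β : Var → D) :
    ∃ β', (Action.sync c₁ c₂ : Action Chan Var D).step β β' ∧ β' c₁.var = β' c₂.var := by
  cases c₁ with
  | read g x =>
    cases c₂ with
    | write g' y =>
      refine ⟨Function.update β x (β y), ⟨?_, ?_⟩, ?_⟩
      · simp
      · intro z hz; simp [Function.update_of_ne hz]
      · show Function.update β x (β y) x = Function.update β x (β y) y
        by_cases hxy : y = x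
        · subst hxy; simp
        · simp [Function.update_of_ne hxy]
    | read g' y => exact h.elim
  | write g x =>
    cases c₂ with
    | read g' y =>
      refine ⟨Function.update β y (β x), ⟨?_, ?_⟩, ?_⟩
      · simp
      · intro z hz; simp [Function.update_of_ne hz]
      · show Function.update β y (β x) x = Function.update β y (β x) y
        by_cases hxy : x = y
        · subst hxy; simp
        · simp [Function.update_of_ne hxy]
    | write g' y => exact h.elim

private theorem WRexec_snoc {β β' : Var → D} {t : List (Action Chan Var D)}
    (ht : Exec β t β') :
    ∀ (β'' : Var → D) (a : Action Chan Var D), a.step β' β'' → Exec β (t ++ [a]) β'' := by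
  induction ht with
  | nil β => exact fun β'' a ha => Exec.cons ha (Exec.nil _)
  | cons hs ht ih => exact fun β'' a ha => Exec.cons hs (ih β'' a ha)

/-! Interface and alphabet of the parallel composition, as functions of
"whole-word data" (channel set / letter set of `w`). -/

private def WRiface (M₁ : Program Q₁ Chan Var D) (C : Set Chan) : Set (Action Chan Var D) :=
  {a | ∃ c : CommAct Chan Var, a = Action.comm c ∧ c.chan ∈ M₁.channels ∧ c.chan ∈ C}

private theorem WRiface_eq (M₁ : Program Q₁ Chan Var D) (M₂ : Program Q₂ Chan Var D) :
    WRiface M₁ M₂.channels = interface M₁ M₂ := rfl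

private theorem WRiface_inter (M₁ : Program Q₁ Chan Var D) (C : Set Chan) :
    WRiface M₁ (M₁.channels ∩ C) = WRiface M₁ C := by
  ext a
  constructor
  · rintro ⟨c, rfl, h1, h2⟩; exact ⟨c, rfl, h1, h2.2⟩
  · rintro ⟨c, rfl, h1, h2⟩; exact ⟨c, rfl, h1, h1, h2⟩

private def WRnalph (M₁ : Program Q₁ Chan Var D) (C : Set Chan)
    (W : Set (Action Chan Var D)) : Set (Action Chan Var D) :=
  {a | ∃ c₁ c₂ : CommAct Chan Var, a = Action.sync c₁ c₂ ∧
      Action.comm c₁ ∈ M₁.alph ∧ Action.comm c₁ ∈ WRiface M₁ C ∧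
      Action.comm c₂ ∈ W ∧ Action.comm c₂ ∈ WRiface M₁ C ∧ rwPair c₁ c₂}
  ∪ ((M₁.alph ∪ W) \ WRiface M₁ C)
  ∪ {a | ∃ x₁ ∈ M₁.vars, ∃ x₂ ∈ (Set.univ : Set Var), a = Action.constr {β | β x₁ = β x₂}}

private theorem WRnalph_eq (M₁ : Program Q₁ Chan Var D) (w : List (Action Chan Var D)) :
    WRnalph M₁ (traceProgram w).channels (traceProgram (Chan := Chan) (D := D) w).alph
      = (parallel M₁ (traceProgram w)).alph := rfl

private theorem WRnalph_inter (M₁ : Program Q₁ Chan Var D) (C : Set Chan)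
    (W : Set (Action Chan Var D)) :
    WRnalph M₁ (M₁.channels ∩ C) W = WRnalph M₁ C W := by
  unfold WRnalph
  rw [WRiface_inter]

/-- The finite set of "relevant" letters of `w` for the behaviour of `P`. -/
private def WRrel (P : Program QP Chan Var D) : Set (Action Chan Var D) :=
  P.alph ∪ {a | ∃ c₁ c₂ : CommAct Chan Var, a = Action.comm c₂ ∧ Action.sync c₁ c₂ ∈ P.alph}

private theorem WRrel_finite (P : Program QP Chan Var D) (h : P.alph.Finite) :
    (WRrel P).Finite := by
  apply Set.Finite.union h
  apply Set.Finite.subset (h.image (fun a => match a with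
    | Action.sync _ c₂ => Action.comm c₂
    | a => a))
  rintro a ⟨c₁, c₂, rfl, hs⟩
  exact ⟨Action.sync c₁ c₂, hs, rfl⟩

private theorem WRnalph_restrict (M₁ : Program Q₁ Chan Var D) (P : Program QP Chan Var D)
    (C : Set Chan) (X : Set (Action Chan Var D)) {a : Action Chan Var D} (ha : a ∈ P.alph) :
    a ∈ WRnalph M₁ C (WRrel P ∩ X) ↔ a ∈ WRnalph M₁ C X := by
  constructor
  · rintro ((⟨c₁, c₂, rfl, h1, h2, h3, h4, h5⟩ | ⟨h1, h2⟩) | h)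
    · exact Or.inl (Or.inl ⟨c₁, c₂, rfl, h1, h2, h3.2, h4, h5⟩)
    · refine Or.inl (Or.inr ⟨?_, h2⟩)
      rcases h1 with h1 | h1
      · exact Or.inl h1
      · exact Or.inr h1.2
    · exact Or.inr h
  · rintro ((⟨c₁, c₂, rfl, h1, h2, h3, h4, h5⟩ | ⟨h1, h2⟩) | h)
    · refine Or.inl (Or.inl ⟨c₁, c₂, rfl, h1, h2, ⟨?_, h3⟩, h4, h5⟩)
      exact Or.inr ⟨c₁, c₂, rfl, ha⟩
    · refine Or.inl (Or.inr ⟨?_, h2⟩)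
      rcases h1 with h1 | h1
      · exact Or.inl h1
      · exact Or.inr ⟨Or.inl ha, h1⟩
    · exact Or.inr h

/-! The collapsed transition system: states `(Q₁ ⊕ Q₁) × QP` where the second
copy of `Q₁` marks a pending synchronization (before its equality constraint).
`WRnc` are the non-consuming steps, `WRcon b` the steps consuming letter `b`
of `w`. -/

private inductive WRnc (M₁ : Program Q₁ Chan Var D) (P : Program QP Chan Var D)
    (C : Set Chan) (W : Set (Action Chan Var D)) :
    (Q₁ ⊕ Q₁) × QP → (Q₁ ⊕ Q₁) × QP → Prop where
  | m1_sync {q₁ p₁ : Q₁} {p p' : QP} {a : Action Chan Var D} :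
      a ∈ M₁.alph → a ∉ WRiface M₁ C → a.isComm → a ∈ P.alph →
      M₁.tr q₁ a p₁ → P.tr p a p' → WRnc M₁ P C W (Sum.inl q₁, p) (Sum.inl p₁, p')
  | m1_only {q₁ p₁ : Q₁} {p : QP} {a : Action Chan Var D} :
      a ∈ M₁.alph → a ∉ WRiface M₁ C → ¬(a.isComm ∧ a ∈ P.alph) →
      M₁.tr q₁ a p₁ → WRnc M₁ P C W (Sum.inl q₁, p) (Sum.inl p₁, p)
  | eqc {q₁ : Q₁} {p : QP} : WRnc M₁ P C W (Sum.inr q₁, p) (Sum.inl q₁, p)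
  | p_only {s : Q₁ ⊕ Q₁} {p p' : QP} {a : Action Chan Var D} :
      a ∈ P.alph → a ∉ WRnalph M₁ C W → P.tr p a p' → WRnc M₁ P C W (s, p) (s, p')

private inductive WRcon (M₁ : Program Q₁ Chan Var D) (P : Program QP Chan Var D)
    (C : Set Chan) (b : Action Chan Var D) :
    (Q₁ ⊕ Q₁) × QP → (Q₁ ⊕ Q₁) × QP → Prop where
  | w_sync {q₁ : Q₁} {p p' : QP} : b ∉ WRiface M₁ C → b.isComm → b ∈ P.alph → P.tr p b p' →
      WRcon M₁ P C b (Sum.inl q₁, p) (Sum.inl q₁, p')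
  | w_only {q₁ : Q₁} {p : QP} : b ∉ WRiface M₁ C → ¬(b.isComm ∧ b ∈ P.alph) →
      WRcon M₁ P C b (Sum.inl q₁, p) (Sum.inl q₁, p)
  | sync_p {q₁ p₁ : Q₁} {p p' : QP} {c₁ c₂ : CommAct Chan Var} :
      b = Action.comm c₂ → Action.comm c₁ ∈ M₁.alph → Action.comm c₁ ∈ WRiface M₁ C →
      Action.comm c₂ ∈ WRiface M₁ C → rwPair c₁ c₂ → M₁.tr q₁ (Action.comm c₁) p₁ →
      Action.sync c₁ c₂ ∈ P.alph → P.tr p (Action.sync c₁ c₂) p' →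
      WRcon M₁ P C b (Sum.inl q₁, p) (Sum.inr p₁, p')
  | sync_np {q₁ p₁ : Q₁} {p : QP} {c₁ c₂ : CommAct Chan Var} :
      b = Action.comm c₂ → Action.comm c₁ ∈ M₁.alph → Action.comm c₁ ∈ WRiface M₁ C →
      Action.comm c₂ ∈ WRiface M₁ C → rwPair c₁ c₂ → M₁.tr q₁ (Action.comm c₁) p₁ →
      Action.sync c₁ c₂ ∉ P.alph →
      WRcon M₁ P C b (Sum.inl q₁, p) (Sum.inr p₁, p)

private def WRncl (M₁ : Program Q₁ Chan Var D) (P : Program QP Chan Var D)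
    (C : Set Chan) (W : Set (Action Chan Var D)) (S : Set ((Q₁ ⊕ Q₁) × QP)) :
    Set ((Q₁ ⊕ Q₁) × QP) :=
  {y | ∃ x ∈ S, ReflTransGen (WRnc M₁ P C W) x y}

private def WRcimg (M₁ : Program Q₁ Chan Var D) (P : Program QP Chan Var D)
    (C : Set Chan) (b : Action Chan Var D) (S : Set ((Q₁ ⊕ Q₁) × QP)) :
    Set ((Q₁ ⊕ Q₁) × QP) :=
  {y | ∃ x ∈ S, WRcon M₁ P C b x y}

private def WRreach (M₁ : Program Q₁ Chan Var D) (P : Program QP Chan Var D)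
    (C : Set Chan) (W : Set (Action Chan Var D)) (w : List (Action Chan Var D)) :
    Set ((Q₁ ⊕ Q₁) × QP) :=
  w.foldl (fun S b => WRncl M₁ P C W (WRcimg M₁ P C b S))
    (WRncl M₁ P C W {(Sum.inl M₁.init, P.init)})

private theorem WRreach_append (M₁ : Program Q₁ Chan Var D) (P : Program QP Chan Var D)
    (C : Set Chan) (W : Set (Action Chan Var D)) (u : List (Action Chan Var D))
    (b : Action Chan Var D) :
    WRreach M₁ P C W (u ++ [b]) = WRncl M₁ P C W (WRcimg M₁ P C b (WRreach M₁ P C W u)) := by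
  simp [WRreach, List.foldl_append]

private theorem WRncl_mem_self {M₁ : Program Q₁ Chan Var D} {P : Program QP Chan Var D}
    {C : Set Chan} {W : Set (Action Chan Var D)} {S : Set ((Q₁ ⊕ Q₁) × QP)}
    {x : (Q₁ ⊕ Q₁) × QP} (h : x ∈ S) : x ∈ WRncl M₁ P C W S :=
  ⟨x, h, ReflTransGen.refl⟩

private theorem WRncl_closed {M₁ : Program Q₁ Chan Var D} {P : Program QP Chan Var D}
    {C : Set Chan} {W : Set (Action Chan Var D)} {S : Set ((Q₁ ⊕ Q₁) × QP)}
    {x y : (Q₁ ⊕ Q₁) × QP} (hx : x ∈ WRncl M₁ P C W S) (h : WRnc M₁ P C W x y) :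
    y ∈ WRncl M₁ P C W S := by
  obtain ⟨z, hz, hr⟩ := hx
  exact ⟨z, hz, hr.tail h⟩

private theorem WRreach_ncl (M₁ : Program Q₁ Chan Var D) (P : Program QP Chan Var D)
    (C : Set Chan) (W : Set (Action Chan Var D)) (w : List (Action Chan Var D)) :
    ∃ S, WRreach M₁ P C W w = WRncl M₁ P C W S := by
  induction w using List.reverseRecOn with
  | nil => exact ⟨_, rfl⟩
  | append_singleton u b ih => exact ⟨_, WRreach_append M₁ P C W u b⟩

private theorem WRreach_closed {M₁ : Program Q₁ Chan Var D} {P : Program QP Chan Var D}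
    {C : Set Chan} {W : Set (Action Chan Var D)} {w : List (Action Chan Var D)}
    {x y : (Q₁ ⊕ Q₁) × QP} (hx : x ∈ WRreach M₁ P C W w) (h : WRnc M₁ P C W x y) :
    y ∈ WRreach M₁ P C W w := by
  obtain ⟨S, hS⟩ := WRreach_ncl M₁ P C W w
  rw [hS] at hx ⊢
  exact WRncl_closed hx h

private theorem WRreach_con {M₁ : Program Q₁ Chan Var D} {P : Program QP Chan Var D}
    {C : Set Chan} {W : Set (Action Chan Var D)} {w : List (Action Chan Var D)}
    {b : Action Chan Var D} {x y : (Q₁ ⊕ Q₁) × QP}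
    (hx : x ∈ WRreach M₁ P C W w) (h : WRcon M₁ P C b x y) :
    y ∈ WRreach M₁ P C W (w ++ [b]) := by
  rw [WRreach_append]
  exact WRncl_mem_self ⟨x, hx, h⟩

/-! Guess congruence : only `M₁.channels ∩ C` and `WRrel P ∩ W` matter. -/

private theorem WRnc_eq (M₁ : Program Q₁ Chan Var D) (P : Program QP Chan Var D)
    (C : Set Chan) (X : Set (Action Chan Var D)) :
    WRnc M₁ P (M₁.channels ∩ C) (WRrel P ∩ X) = WRnc M₁ P C X := by
  funext x y
  apply propext
  constructor <;> intro h <;> cases h with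
  | m1_sync ha hni hcm hpa htr hptr =>
      first
        | exact WRnc.m1_sync ha (by rwa [WRiface_inter] at hni) hcm hpa htr hptr
        | exact WRnc.m1_sync ha (by rwa [WRiface_inter]) hcm hpa htr hptr
  | m1_only ha hni hnc htr =>
      first
        | exact WRnc.m1_only ha (by rwa [WRiface_inter] at hni) hnc htr
        | exact WRnc.m1_only ha (by rwa [WRiface_inter]) hnc htr
  | eqc => exact WRnc.eqc
  | p_only hpa hnn hptr =>
      first
        | exact WRnc.p_only hpa
            (by rw [WRnalph_inter, WRnalph_restrict M₁ P C X hpa] at hnn; exact hnn) hptr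
        | exact WRnc.p_only hpa
            (by rw [WRnalph_inter, WRnalph_restrict M₁ P C X hpa]; exact hnn) hptr

private theorem WRcon_eq (M₁ : Program Q₁ Chan Var D) (P : Program QP Chan Var D)
    (C : Set Chan) :
    WRcon M₁ P (M₁.channels ∩ C) = WRcon M₁ P C := by
  funext b x y
  apply propext
  constructor <;> intro h <;> cases h with
  | w_sync hni hcm hpa hptr =>
      first
        | exact WRcon.w_sync (by rwa [WRiface_inter] at hni) hcm hpa hptr
        | exact WRcon.w_sync (by rwa [WRiface_inter]) hcm hpa hptr
  | w_only hni hnc =>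
      first
        | exact WRcon.w_only (by rwa [WRiface_inter] at hni) hnc
        | exact WRcon.w_only (by rwa [WRiface_inter]) hnc
  | sync_p hb h1 h2 h3 h4 h5 h6 h7 =>
      first
        | exact WRcon.sync_p hb h1 (by rwa [WRiface_inter] at h2) (by rwa [WRiface_inter] at h3)
            h4 h5 h6 h7
        | exact WRcon.sync_p hb h1 (by rwa [WRiface_inter]) (by rwa [WRiface_inter]) h4 h5 h6 h7
  | sync_np hb h1 h2 h3 h4 h5 h6 =>
      first
        | exact WRcon.sync_np hb h1 (by rwa [WRiface_inter] at h2) (by rwa [WRiface_inter] at h3)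
            h4 h5 h6
        | exact WRcon.sync_np hb h1 (by rwa [WRiface_inter]) (by rwa [WRiface_inter]) h4 h5 h6

private theorem WRreach_eq (M₁ : Program Q₁ Chan Var D) (P : Program QP Chan Var D)
    (C : Set Chan) (X : Set (Action Chan Var D)) (w : List (Action Chan Var D)) :
    WRreach M₁ P (M₁.channels ∩ C) (WRrel P ∩ X) w = WRreach M₁ P C X w := by
  unfold WRreach WRncl WRcimg
  rw [WRnc_eq, WRcon_eq]

/-! Helpers about the semantic side. -/

private theorem WRpcomm (P : Program QP Chan Var D) (hP : IsProperty P)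
    (hcP : ∀ a ∈ P.alph, ¬ a.isConstraint) {a : Action Chan Var D} (ha : a ∈ P.alph) :
    a.isComm := by
  cases a with
  | comm c => trivial
  | sync c₁ c₂ => trivial
  | assign x e => exact absurd trivial (hP.no_assign _ ha)
  | constr c => exact absurd trivial (hcP _ ha)

private theorem WRmem_alph_left {M₁ : Program Q₁ Chan Var D} {M₂ : Program Q₂ Chan Var D}
    {a : Action Chan Var D} (ha : a ∈ M₁.alph) (hn : a ∉ interface M₁ M₂) :
    a ∈ (parallel M₁ M₂).alph :=
  Or.inl (Or.inr ⟨Or.inl ha, hn⟩)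

private theorem WRmem_alph_right {M₁ : Program Q₁ Chan Var D} {M₂ : Program Q₂ Chan Var D}
    {a : Action Chan Var D} (ha : a ∈ M₂.alph) (hn : a ∉ interface M₁ M₂) :
    a ∈ (parallel M₁ M₂).alph :=
  Or.inl (Or.inr ⟨Or.inr ha, hn⟩)

private theorem WRmem_alph_sync {M₁ : Program Q₁ Chan Var D} {M₂ : Program Q₂ Chan Var D}
    {c₁ c₂ : CommAct Chan Var} (h1 : Action.comm c₁ ∈ M₁.alph)
    (h2 : Action.comm c₁ ∈ interface M₁ M₂) (h3 : Action.comm c₂ ∈ M₂.alph)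
    (h4 : Action.comm c₂ ∈ interface M₁ M₂) (h5 : rwPair c₁ c₂) :
    (Action.sync c₁ c₂ : Action Chan Var D) ∈ (parallel M₁ M₂).alph :=
  Or.inl (Or.inl ⟨c₁, c₂, rfl, h1, h2, h3, h4, h5⟩)

private theorem WRmem_alph_constr {M₁ : Program Q₁ Chan Var D} {M₂ : Program Q₂ Chan Var D}
    {x₁ x₂ : Var} (h1 : x₁ ∈ M₁.vars) (h2 : x₂ ∈ M₂.vars) :
    (Action.constr {β : Var → D | β x₁ = β x₂}) ∈ (parallel M₁ M₂).alph :=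
  Or.inr ⟨x₁, h1, x₂, h2, rfl⟩

/-! Projection onto the collapsed state space. -/

private def WRproj {n : ℕ}
    (s : ((Q₁ × Fin (n+1)) ⊕ (Q₁ × Fin (n+1) × Var × Var)) × QP) : (Q₁ ⊕ Q₁) × QP :=
  (match s.1 with
   | Sum.inl (q, _) => Sum.inl q
   | Sum.inr (q, _, _, _) => Sum.inr q, s.2)

private def WRpos {n : ℕ}
    (s : ((Q₁ × Fin (n+1)) ⊕ (Q₁ × Fin (n+1) × Var × Var)) × QP) : ℕ :=
  match s.1 with
  | Sum.inl (_, j) => j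
  | Sum.inr (_, j, _, _) => j

private theorem WRtake_succ (w : List (Action Chan Var D)) (i : ℕ) (h : i < w.length) :
    w.take (i + 1) = w.take i ++ [w.get ⟨i, h⟩] := by
  rw [← List.take_concat_get h]
  simp [List.concat_eq_append]

/-! Forward simulation : every reachable state of `(M₁ ‖ M_w) × P` projects
into the collapsed reach-set. -/

private theorem WRforward (M₁ : Program Q₁ Chan Var D) (P : Program QP Chan Var D)
    (hP : IsProperty P) (hcP : ∀ a ∈ P.alph, ¬ a.isConstraint)
    (w : List (Action Chan Var D))
    {s : ((Q₁ × Fin (w.length+1)) ⊕ (Q₁ × Fin (w.length+1) × Var × Var)) × QP}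
    {t : List (Action Chan Var D)}
    (hr : (conj (parallel M₁ (traceProgram w)) P).Reach s t) :
    WRproj s ∈ WRreach M₁ P (traceProgram w).channels (traceProgram w).alph
      (w.take (WRpos s)) := by
  induction hr with
  | nil =>
      have h0 : WRpos ((conj (parallel M₁ (traceProgram w)) P).init) = 0 := by
        simp [WRpos, conj, parallel, traceProgram]
      rw [h0, List.take_zero]
      exact WRncl_mem_self rfl
  | @snoc q t a q' hr htr ih =>
      cases htr with
      | sync hci hmtr hptr =>
          obtain ⟨hcm, hNa, hpa⟩ := hci
          cases hmtr with
          | sync h1 h2 h3 h4 h5 h6 h7 =>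
              obtain ⟨hlt, hbe, hsucc⟩ := h7
              simp only [WRpos, WRproj] at ih ⊢
              rw [hsucc, WRtake_succ w _ hlt]
              exact WRreach_con ih
                (WRcon.sync_p hbe.symm h1 h2 h4 h5 h6 hpa hptr)
          | left h1 h2 h3 =>
              simp only [WRpos, WRproj] at ih ⊢
              exact WRreach_closed ih (WRnc.m1_sync h1 h2 hcm hpa h3 hptr)
          | right h1 h2 h3 =>
              obtain ⟨hlt, hbe, hsucc⟩ := h3
              simp only [WRpos, WRproj] at ih ⊢
              rw [hsucc, WRtake_succ w _ hlt]
              subst hbe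
              exact WRreach_con ih (WRcon.w_sync h2 hcm hpa hptr)
          | eqc =>
              exact absurd hcm id
      | left hNa hnci hmtr =>
          cases hmtr with
          | sync h1 h2 h3 h4 h5 h6 h7 =>
              obtain ⟨hlt, hbe, hsucc⟩ := h7
              simp only [WRpos, WRproj] at ih ⊢
              rw [hsucc, WRtake_succ w _ hlt]
              exact WRreach_con ih (WRcon.sync_np hbe.symm h1 h2 h4 h5 h6
                (fun hp => hnci ⟨trivial, hNa, hp⟩))
          | left h1 h2 h3 =>
              simp only [WRpos, WRproj] at ih ⊢
              exact WRreach_closed ih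
                (WRnc.m1_only h1 h2 (fun hh => hnci ⟨hh.1, hNa, hh.2⟩) h3)
          | right h1 h2 h3 =>
              obtain ⟨hlt, hbe, hsucc⟩ := h3
              simp only [WRpos, WRproj] at ih ⊢
              rw [hsucc, WRtake_succ w _ hlt]
              subst hbe
              exact WRreach_con ih
                (WRcon.w_only h2 (fun hh => hnci ⟨hh.1, hNa, hh.2⟩))
          | eqc =>
              simp only [WRpos, WRproj] at ih ⊢
              exact WRreach_closed ih WRnc.eqc
      | right hpa hnci hptr =>
          have hcm := WRpcomm P hP hcP hpa
          have hnn : a ∉ WRnalph M₁ (traceProgram w).channels (traceProgram w).alph :=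
            fun hn => hnci ⟨hcm, hn, hpa⟩
          simp only [WRpos, WRproj] at ih ⊢
          exact WRreach_closed ih (WRnc.p_only hpa hnn hptr)

/-! Backward direction : every collapsed reach-set element is realizable by a
feasible trace of `(M₁ ‖ M_w) × P` (resolving pending synchronizations
immediately). -/

private def WRreal (M₁ : Program Q₁ Chan Var D) (P : Program QP Chan Var D)
    (w : List (Action Chan Var D)) (β₀ : Var → D) (i : ℕ) (hi : i < w.length + 1)
    (s : (Q₁ ⊕ Q₁) × QP) : Prop :=
  ∃ t β, (conj (parallel M₁ (traceProgram w)) P).Reach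
      (Sum.inl (Sum.elim id id s.1, (⟨i, hi⟩ : Fin (w.length + 1))), s.2) t ∧ Exec β₀ t β

private theorem WRreal_nc (M₁ : Program Q₁ Chan Var D) (P : Program QP Chan Var D)
    (hc₁ : ∀ a ∈ M₁.alph, ¬ a.isConstraint) (hcP : ∀ a ∈ P.alph, ¬ a.isConstraint)
    (w : List (Action Chan Var D)) (β₀ : Var → D) {i : ℕ} {hi : i < w.length + 1}
    {s s' : (Q₁ ⊕ Q₁) × QP} (hs : WRreal M₁ P w β₀ i hi s)
    (h : WRnc M₁ P (traceProgram w).channels (traceProgram w).alph s s') :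
    WRreal M₁ P w β₀ i hi s' := by
  obtain ⟨t, β, hr, he⟩ := hs
  cases h with
  | @m1_sync q₁ p₁ p p' a ha hni hcm hpa htr hptr =>
      obtain ⟨β', hst⟩ := WRstep_sat a (hc₁ a ha) β
      exact ⟨_, β', hr.snoc (ConjTrans.sync ⟨hcm, WRmem_alph_left ha hni, hpa⟩
        (ParTrans.left ha hni htr) hptr), WRexec_snoc he β' a hst⟩
  | @m1_only q₁ p₁ p a ha hni hnc htr =>
      obtain ⟨β', hst⟩ := WRstep_sat a (hc₁ a ha) β
      exact ⟨_, β', hr.snoc (ConjTrans.left (WRmem_alph_left ha hni)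
        (fun hci => hnc ⟨hci.1, hci.2.2⟩) (ParTrans.left ha hni htr)),
        WRexec_snoc he β' a hst⟩
  | eqc => exact ⟨t, β, hr, he⟩
  | @p_only s₁ p p' a hpa hnn hptr =>
      obtain ⟨β', hst⟩ := WRstep_sat a (hcP a hpa) β
      exact ⟨_, β', hr.snoc (ConjTrans.right hpa
        (fun hci => hnn hci.2.1) hptr), WRexec_snoc he β' a hst⟩

private theorem WRreal_con (M₁ : Program Q₁ Chan Var D) (M₂ : Program Q₂ Chan Var D)
    (P : Program QP Chan Var D) (h₁ : M₁.Good)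
    (hc₂ : ∀ a ∈ M₂.alph, ¬ a.isConstraint)
    (w : List (Action Chan Var D)) (hw : ∀ a ∈ w, a ∈ M₂.alph) (β₀ : Var → D)
    {i : ℕ} (hlt : i < w.length) (hi : i < w.length + 1) (hi' : i + 1 < w.length + 1)
    {s s' : (Q₁ ⊕ Q₁) × QP} (hs : WRreal M₁ P w β₀ i hi s)
    (h : WRcon M₁ P (traceProgram w).channels (w.get ⟨i, hlt⟩) s s') :
    WRreal M₁ P w β₀ (i + 1) hi' s' := by
  obtain ⟨t, β, hr, he⟩ := hs
  have hbw : w.get ⟨i, hlt⟩ ∈ (traceProgram (Chan := Chan) (D := D) w).alph :=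
    List.get_mem w ⟨i, hlt⟩
  have hb2 : w.get ⟨i, hlt⟩ ∈ M₂.alph := hw _ (List.get_mem w ⟨i, hlt⟩)
  have hmw : (traceProgram w).tr (⟨i, hi⟩ : Fin (w.length + 1)) (w.get ⟨i, hlt⟩)
      (⟨i + 1, hi'⟩ : Fin (w.length + 1)) := ⟨hlt, rfl, rfl⟩
  cases h with
  | @w_sync q₁ p p' hni hcm hpa hptr =>
      obtain ⟨β', hst⟩ := WRstep_sat _ (hc₂ _ hb2) β
      exact ⟨_, β', hr.snoc (ConjTrans.sync ⟨hcm, WRmem_alph_right hbw hni, hpa⟩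
        (ParTrans.right hbw hni hmw) hptr), WRexec_snoc he β' _ hst⟩
  | @w_only q₁ p hni hnc =>
      obtain ⟨β', hst⟩ := WRstep_sat _ (hc₂ _ hb2) β
      exact ⟨_, β', hr.snoc (ConjTrans.left (WRmem_alph_right hbw hni)
        (fun hci => hnc ⟨hci.1, hci.2.2⟩) (ParTrans.right hbw hni hmw)),
        WRexec_snoc he β' _ hst⟩
  | @sync_p q₁ p₁ p p' c₁ c₂ hbe hm1 hif1 hif2 hrw htr hpa hptr =>
      obtain ⟨β', hst, heq⟩ := WRsync_sat (D := D) hrw β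
      have hbw' : (Action.comm c₂ : Action Chan Var D) ∈ (traceProgram w).alph := hbe ▸ hbw
      have hmw' : (traceProgram w).tr (⟨i, hi⟩ : Fin (w.length + 1)) (Action.comm c₂)
          (⟨i + 1, hi'⟩ : Fin (w.length + 1)) := hbe ▸ hmw
      refine ⟨_, β', (hr.snoc (ConjTrans.sync
          ⟨(show (Action.sync c₁ c₂ : Action Chan Var D).isComm from trivial),
            WRmem_alph_sync hm1 hif1 hbw' hif2 hrw, hpa⟩
          (ParTrans.sync hm1 hif1 hbw' hif2 hrw htr hmw') hptr)).snoc
        (ConjTrans.left (WRmem_alph_constr (h₁.2.1 _ hm1) trivial)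
          (fun hci => hci.1) ParTrans.eqc), ?_⟩
      exact WRexec_snoc (WRexec_snoc he β' _ hst) β' _ ⟨rfl, heq⟩
  | @sync_np q₁ p₁ p c₁ c₂ hbe hm1 hif1 hif2 hrw htr hpa =>
      obtain ⟨β', hst, heq⟩ := WRsync_sat (D := D) hrw β
      have hbw' : (Action.comm c₂ : Action Chan Var D) ∈ (traceProgram w).alph := hbe ▸ hbw
      have hmw' : (traceProgram w).tr (⟨i, hi⟩ : Fin (w.length + 1)) (Action.comm c₂)
          (⟨i + 1, hi'⟩ : Fin (w.length + 1)) := hbe ▸ hmw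
      refine ⟨_, β', (hr.snoc (ConjTrans.left
          (WRmem_alph_sync hm1 hif1 hbw' hif2 hrw)
          (fun hci => hpa hci.2.2)
          (ParTrans.sync hm1 hif1 hbw' hif2 hrw htr hmw'))).snoc
        (ConjTrans.left (WRmem_alph_constr (h₁.2.1 _ hm1) trivial)
          (fun hci => hci.1) ParTrans.eqc), ?_⟩
      exact WRexec_snoc (WRexec_snoc he β' _ hst) β' _ ⟨rfl, heq⟩

private theorem WRreal_rtg (M₁ : Program Q₁ Chan Var D) (P : Program QP Chan Var D)
    (hc₁ : ∀ a ∈ M₁.alph, ¬ a.isConstraint) (hcP : ∀ a ∈ P.alph, ¬ a.isConstraint)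
    (w : List (Action Chan Var D)) (β₀ : Var → D) {i : ℕ} {hi : i < w.length + 1}
    {x y : (Q₁ ⊕ Q₁) × QP} (hx : WRreal M₁ P w β₀ i hi x)
    (h : ReflTransGen (WRnc M₁ P (traceProgram w).channels (traceProgram w).alph) x y) :
    WRreal M₁ P w β₀ i hi y := by
  induction h with
  | refl => exact hx
  | tail _ hstep ih => exact WRreal_nc M₁ P hc₁ hcP w β₀ ih hstep

private theorem WRbackward (M₁ : Program Q₁ Chan Var D) (M₂ : Program Q₂ Chan Var D)
    (P : Program QP Chan Var D) (h₁ : M₁.Good)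
    (hc₁ : ∀ a ∈ M₁.alph, ¬ a.isConstraint) (hc₂ : ∀ a ∈ M₂.alph, ¬ a.isConstraint)
    (hcP : ∀ a ∈ P.alph, ¬ a.isConstraint)
    (w : List (Action Chan Var D)) (hw : ∀ a ∈ w, a ∈ M₂.alph) (β₀ : Var → D) :
    ∀ i (hi : i < w.length + 1), ∀ s ∈ WRreach M₁ P (traceProgram w).channels
      (traceProgram w).alph (w.take i), WRreal M₁ P w β₀ i hi s := by
  intro i
  induction i with
  | zero =>
      intro hi s hs
      rw [List.take_zero] at hs
      obtain ⟨x, hx, hrt⟩ := hs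
      rw [Set.mem_singleton_iff] at hx
      subst hx
      refine WRreal_rtg M₁ P hc₁ hcP w β₀ ⟨[], β₀, ?_, Exec.nil β₀⟩ hrt
      have : (⟨0, hi⟩ : Fin (w.length + 1)) = 0 := Fin.mk_zero
      rw [this]
      exact Program.Reach.nil
  | succ i ih =>
      intro hi s hs
      have hlt : i < w.length := by omega
      rw [WRtake_succ w i hlt, WRreach_append] at hs
      obtain ⟨x, ⟨y, hy, hcon⟩, hrt⟩ := hs
      refine WRreal_rtg M₁ P hc₁ hcP w β₀ ?_ hrt
      exact WRreal_con M₁ M₂ P h₁ hc₂ w hw β₀ hlt (by omega) hi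
        (ih (by omega) y hy) hcon

private theorem WRmain_iff (M₁ : Program Q₁ Chan Var D) (M₂ : Program Q₂ Chan Var D)
    (P : Program QP Chan Var D) (h₁ : M₁.Good) (hP : IsProperty P)
    (hc₁ : ∀ a ∈ M₁.alph, ¬ a.isConstraint) (hc₂ : ∀ a ∈ M₂.alph, ¬ a.isConstraint)
    (hcP : ∀ a ∈ P.alph, ¬ a.isConstraint)
    (w : List (Action Chan Var D)) (hw : ∀ a ∈ w, a ∈ M₂.alph)
    (hne : Nonempty (Var → D)) :
    Sat (parallel M₁ (traceProgram w)) P ↔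
      ¬ ∃ q₁ p, q₁ ∈ M₁.acc ∧ p ∉ P.acc ∧
        (Sum.inl q₁, p) ∈ WRreach M₁ P (traceProgram w).channels (traceProgram w).alph w := by
  constructor
  · intro hsat
    rintro ⟨q₁, p, hq, hp, hmem⟩
    obtain ⟨β₀⟩ := hne
    have hmem' : (Sum.inl q₁, p) ∈ WRreach M₁ P (traceProgram w).channels
        (traceProgram w).alph (w.take w.length) := by
      rw [List.take_length]; exact hmem
    obtain ⟨t, β, hr, he⟩ := WRbackward M₁ M₂ P h₁ hc₁ hc₂ hcP w hw β₀
      w.length (by omega) _ hmem'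
    refine hsat t ⟨_, ⟨⟨q₁, hq, ⟨w.length, by omega⟩, ?_, rfl⟩, hp⟩, hr⟩ ⟨β₀, β, he⟩
    exact Set.mem_singleton_iff.mpr (by ext; simp [Fin.last])
  · intro hno t ht _
    obtain ⟨sq, hacc, hr⟩ := ht
    have hproj := WRforward M₁ P hP hcP w hr
    obtain ⟨s1, s2⟩ := sq
    obtain ⟨⟨q₁, hq, q₂, hq2, hseq⟩, hp⟩ := hacc
    subst hseq
    have hq2' : q₂ = Fin.last w.length := hq2
    subst hq2'
    simp only [WRproj, WRpos, Fin.val_last, List.take_length] at hproj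
    exact hno ⟨q₁, s2, hq, hp, hproj⟩

/-! The DFA recognizing the weakest assumption. -/

private noncomputable def WRdfa (M₁ : Program Q₁ Chan Var D) (M₂ : Program Q₂ Chan Var D)
    (P : Program QP Chan Var D) :
    DFA (Action Chan Var D)
      (Bool × {C : Set Chan // C ⊆ M₁.channels} × {W : Set (Action Chan Var D) // W ⊆ WRrel P} ×
       ({C : Set Chan // C ⊆ M₁.channels} → {W : Set (Action Chan Var D) // W ⊆ WRrel P} →
        Set ((Q₁ ⊕ Q₁) × QP))) where
  step s a := (if a ∈ M₂.alph then s.1 else false,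
    ⟨s.2.1.1 ∪ (M₁.channels ∩ a.chans), Set.union_subset s.2.1.2 Set.inter_subset_left⟩,
    ⟨s.2.2.1.1 ∪ (WRrel P ∩ {a}), Set.union_subset s.2.2.1.2 Set.inter_subset_left⟩,
    fun C W => WRncl M₁ P C.1 W.1 (WRcimg M₁ P C.1 a (s.2.2.2 C W)))
  start := (true, ⟨∅, Set.empty_subset _⟩, ⟨∅, Set.empty_subset _⟩,
    fun C W => WRncl M₁ P C.1 W.1 {(Sum.inl M₁.init, P.init)})
  accept := {s | s.1 = true ∧ ¬ ∃ q₁ p, q₁ ∈ M₁.acc ∧ p ∉ P.acc ∧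
      (Sum.inl q₁, p) ∈ s.2.2.2 s.2.1 s.2.2.1}

private theorem WRdfa_fold1 (M₁ : Program Q₁ Chan Var D) (M₂ : Program Q₂ Chan Var D)
    (P : Program QP Chan Var D) :
    ∀ (w : List (Action Chan Var D)) s,
      ((w.foldl (WRdfa M₁ M₂ P).step s).1 = true) ↔ (s.1 = true ∧ ∀ a ∈ w, a ∈ M₂.alph) := by
  intro w
  induction w with
  | nil => intro s; simp
  | cons a w ih =>
      intro s
      rw [List.foldl_cons, ih]
      by_cases ha : a ∈ M₂.alph <;> simp [WRdfa, ha]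

private theorem WRdfa_fold2 (M₁ : Program Q₁ Chan Var D) (M₂ : Program Q₂ Chan Var D)
    (P : Program QP Chan Var D) :
    ∀ (w : List (Action Chan Var D)) s,
      (w.foldl (WRdfa M₁ M₂ P).step s).2.1.1
        = s.2.1.1 ∪ (M₁.channels ∩ (traceProgram (D := D) w).channels) := by
  intro w
  induction w with
  | nil =>
      intro s
      have : (traceProgram (Chan := Chan) (Var := Var) (D := D) ([] : List (Action Chan Var D))).channels = ∅ := by
        ext c; simp [Program.channels, traceProgram]
      rw [this]; simp
  | cons a w ih =>
      intro s
      rw [List.foldl_cons, ih]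
      have : (traceProgram (D := D) (a :: w)).channels
          = a.chans ∪ (traceProgram (D := D) w).channels := by
        ext c; simp [Program.channels, traceProgram, List.mem_cons]
      rw [this]
      show s.2.1.1 ∪ (M₁.channels ∩ a.chans) ∪ _ = _
      ext c
      simp only [Set.mem_union, Set.mem_inter_iff]
      tauto

private theorem WRdfa_fold3 (M₁ : Program Q₁ Chan Var D) (M₂ : Program Q₂ Chan Var D)
    (P : Program QP Chan Var D) :
    ∀ (w : List (Action Chan Var D)) s,
      (w.foldl (WRdfa M₁ M₂ P).step s).2.2.1.1
        = s.2.2.1.1 ∪ (WRrel P ∩ (traceProgram (D := D) w).alph) := by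
  intro w
  induction w with
  | nil =>
      intro s
      have : (traceProgram (Chan := Chan) (Var := Var) (D := D) ([] : List (Action Chan Var D))).alph = ∅ := by
        ext a; simp [traceProgram]
      rw [this]; simp
  | cons a w ih =>
      intro s
      rw [List.foldl_cons, ih]
      have : (traceProgram (D := D) (a :: w)).alph
          = {a} ∪ (traceProgram (D := D) w).alph := by
        ext x; simp [traceProgram, List.mem_cons]
      rw [this]
      show s.2.2.1.1 ∪ (WRrel P ∩ {a}) ∪ _ = _
      ext x
      simp only [Set.mem_union, Set.mem_inter_iff, Set.mem_singleton_iff]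
      tauto

private theorem WRdfa_fold4 (M₁ : Program Q₁ Chan Var D) (M₂ : Program Q₂ Chan Var D)
    (P : Program QP Chan Var D) :
    ∀ (w : List (Action Chan Var D)) s C W,
      (w.foldl (WRdfa M₁ M₂ P).step s).2.2.2 C W
        = w.foldl (fun S b => WRncl M₁ P C.1 W.1 (WRcimg M₁ P C.1 b S)) (s.2.2.2 C W) := by
  intro w
  induction w with
  | nil => intros; rfl
  | cons a w ih =>
      intro s C W
      rw [List.foldl_cons, ih, List.foldl_cons]
      rfl

private theorem WRdfa_eval_table (M₁ : Program Q₁ Chan Var D) (M₂ : Program Q₂ Chan Var D)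
    (P : Program QP Chan Var D) (w : List (Action Chan Var D))
    (C : {C : Set Chan // C ⊆ M₁.channels}) (W : {W : Set (Action Chan Var D) // W ⊆ WRrel P}) :
    (w.foldl (WRdfa M₁ M₂ P).step (WRdfa M₁ M₂ P).start).2.2.2 C W
      = WRreach M₁ P C.1 W.1 w := by
  rw [WRdfa_fold4]
  rfl

end WeakestRegAux

/-- Lemma `weakest_reg`: if the alphabets of `P`, `M₁` and
`M₂` contain no constraints, then the weakest assumption
`L(A_w) = { w ∈ (αM₂)* : M₁ ‖ w ⊨ P }` is regular. -/
theorem weakest_assumption_regular_of_no_constraints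
    {Q₁ Q₂ QP Chan Var D : Type} [Finite Q₁] [Finite Q₂] [Finite QP]
    (M₁ : Program Q₁ Chan Var D) (M₂ : Program Q₂ Chan Var D)
    (P : Program QP Chan Var D)
    (h₁ : M₁.Good) (h₂ : M₂.Good) (hPgood : P.Good) (hP : IsProperty P)
    (hc₁ : ∀ a ∈ M₁.alph, ¬ a.isConstraint)
    (hc₂ : ∀ a ∈ M₂.alph, ¬ a.isConstraint)
    (hcP : ∀ a ∈ P.alph, ¬ a.isConstraint) :
    IsRegularLang {w : List (Action Chan Var D) |
      (∀ a ∈ w, a ∈ M₂.alph) ∧ Sat (parallel M₁ (traceProgram w)) P} := by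
  by_cases hne : Nonempty (Var → D)
  · -- nonempty data domain : use the full construction
    have hch : M₁.channels.Finite := WRchannels_finite M₁ h₁.2.2.1
    have hrel : (WRrel P).Finite := WRrel_finite P hPgood.2.2.1
    haveI : Finite {C : Set Chan // C ⊆ M₁.channels} := WRfinite_subsets hch
    haveI : Finite {W : Set (Action Chan Var D) // W ⊆ WRrel P} := WRfinite_subsets hrel
    refine ⟨_, Fintype.ofFinite _, WRdfa M₁ M₂ P, ?_⟩
    intro w
    have hC : (w.foldl (WRdfa M₁ M₂ P).step (WRdfa M₁ M₂ P).start).2.1.1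
        = M₁.channels ∩ (traceProgram (D := D) w).channels := by
      rw [WRdfa_fold2]
      show (∅ : Set Chan) ∪ _ = _
      rw [Set.empty_union]
    have hW : (w.foldl (WRdfa M₁ M₂ P).step (WRdfa M₁ M₂ P).start).2.2.1.1
        = WRrel P ∩ (traceProgram (D := D) w).alph := by
      rw [WRdfa_fold3]
      show (∅ : Set (Action Chan Var D)) ∪ _ = _
      rw [Set.empty_union]
    have hacc : w ∈ (WRdfa M₁ M₂ P).accepts ↔
        ((w.foldl (WRdfa M₁ M₂ P).step (WRdfa M₁ M₂ P).start).1 = true ∧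
         ¬ ∃ q₁ p, q₁ ∈ M₁.acc ∧ p ∉ P.acc ∧
           (Sum.inl q₁, p) ∈ (w.foldl (WRdfa M₁ M₂ P).step (WRdfa M₁ M₂ P).start).2.2.2
             (w.foldl (WRdfa M₁ M₂ P).step (WRdfa M₁ M₂ P).start).2.1
             (w.foldl (WRdfa M₁ M₂ P).step (WRdfa M₁ M₂ P).start).2.2.1) := Iff.rfl
    rw [hacc, WRdfa_eval_table, hC, hW, WRreach_eq, WRdfa_fold1]
    constructor
    · rintro ⟨⟨-, hw'⟩, hno⟩
      exact ⟨hw', (WRmain_iff M₁ M₂ P h₁ hP hc₁ hc₂ hcP w hw' hne).mpr hno⟩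
    · rintro ⟨hw', hsat⟩
      exact ⟨⟨rfl, hw'⟩, (WRmain_iff M₁ M₂ P h₁ hP hc₁ hc₂ hcP w hw' hne).mp hsat⟩
  · -- empty data domain : every trace is infeasible, so `Sat` always holds
    have hsat : ∀ w : List (Action Chan Var D), Sat (parallel M₁ (traceProgram w)) P := by
      intro w t _ hfe
      obtain ⟨β, -, -⟩ := hfe
      exact hne ⟨β⟩
    refine ⟨Bool, inferInstance,
      ⟨fun s a => if a ∈ M₂.alph then s else false, true, {s | s = true}⟩, ?_⟩
    intro w
    have hfold : ∀ s : Bool,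
        (w.foldl (fun s (a : Action Chan Var D) => if a ∈ M₂.alph then s else false) s = true)
          ↔ (s = true ∧ ∀ a ∈ w, a ∈ M₂.alph) := by
      induction w with
      | nil => intro s; simp
      | cons a w ih =>
          intro s
          rw [List.foldl_cons, ih]
          by_cases ha : a ∈ M₂.alph <;> simp [ha]
    constructor
    · intro h
      exact ⟨((hfold true).mp h).2, hsat w⟩
    · rintro ⟨hw', -⟩
      exact (hfold true).mpr ⟨rfl, hw'⟩

end AGR
end

section
/- Let A1, A2 and Ap be finite-state automata such that αAp ⊆ (αA1 ∪ αA2). Then the weakest assumption A_w for A1, A2 and Ap, with language L(A_w) = { w ∈ (αA2)* : A1 || w ⊨ Ap }, is regular. -/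
/-!
Finite-state automata viewed as communicating programs without constraints
and without assignments, with the composition operators relaxed so that
components synchronize on all mutual alphabet letters.
-/

open scoped Classical

namespace AGR

/-- A (nondeterministic) finite-state automaton over the letter type `A`,
with state type `Q`: an initial state, a transition relation, a set of
accepting states and an alphabet. -/
structure Aut (A Q : Type) where
  init : Q
  tr : Q → A → Q → Prop
  acc : Set Q
  alph : Set A

namespace Aut

variable {A Q : Type}

/-- Well-formedness: transitions are labeled by alphabet letters. -/
def WF (M : Aut A Q) : Prop := ∀ q a q', M.tr q a q' → a ∈ M.alph

/-- `M.Reach q w` : there is a run of `M` from the initial state to `q`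
reading the word `w`. -/
inductive Reach (M : Aut A Q) : Q → List A → Prop where
  | nil : Reach M M.init []
  | snoc {q : Q} {w : List A} {a : A} {q' : Q} :
      Reach M q w → M.tr q a q' → Reach M q' (w ++ [a])

/-- The language of accepted words of `M`. -/
def AccWords (M : Aut A Q) : Set (List A) :=
  {w | ∃ q ∈ M.acc, M.Reach q w}

end Aut

/-- Transitions of the (relaxed) composition of two automata: the components
synchronize on all mutual alphabet letters and interleave on all other
letters. -/
inductive AutTrans {A Q₁ Q₂ : Type} (M₁ : Aut A Q₁) (M₂ : Aut A Q₂) :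
    Q₁ × Q₂ → A → Q₁ × Q₂ → Prop where
  | sync {q₁ p₁ : Q₁} {q₂ p₂ : Q₂} {a : A} :
      a ∈ M₁.alph → a ∈ M₂.alph → M₁.tr q₁ a p₁ → M₂.tr q₂ a p₂ →
      AutTrans M₁ M₂ (q₁, q₂) a (p₁, p₂)
  | left {q₁ p₁ : Q₁} {q₂ : Q₂} {a : A} :
      a ∈ M₁.alph → a ∉ M₂.alph → M₁.tr q₁ a p₁ →
      AutTrans M₁ M₂ (q₁, q₂) a (p₁, q₂)
  | right {q₁ : Q₁} {q₂ p₂ : Q₂} {a : A} :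
      a ∈ M₂.alph → a ∉ M₁.alph → M₂.tr q₂ a p₂ →
      AutTrans M₁ M₂ (q₁, q₂) a (q₁, p₂)

/-- The parallel composition `M₁ ‖ M₂` of two automata (relaxed
synchronization on mutual letters); accepting states are pairs of accepting
states. -/
def parAut {A Q₁ Q₂ : Type} (M₁ : Aut A Q₁) (M₂ : Aut A Q₂) :
    Aut A (Q₁ × Q₂) where
  init := (M₁.init, M₂.init)
  tr := AutTrans M₁ M₂
  acc := {s | s.1 ∈ M₁.acc ∧ s.2 ∈ M₂.acc}
  alph := M₁.alph ∪ M₂.alph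

/-- The conjunctive composition `M × P` of an automaton and a property
automaton (relaxed synchronization on mutual letters); accepting states are
pairs of an accepting state of `M` and a rejecting state of `P`. -/
def conjAut {A QM QP : Type} (M : Aut A QM) (P : Aut A QP) :
    Aut A (QM × QP) where
  init := (M.init, P.init)
  tr := AutTrans M P
  acc := {s | s.1 ∈ M.acc ∧ s.2 ∉ P.acc}
  alph := M.alph ∪ P.alph

/-- `M ⊨ P` : the conjunctive composition `M × P` accepts no word
(there are no constraints, so every trace is feasible). -/
def SatAut {A QM QP : Type} (M : Aut A QM) (P : Aut A QP) : Prop :=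
  ∀ w : List A, w ∉ (conjAut M P).AccWords

/-- `M_w`: the automaton accepting exactly the word `w`. -/
def wordAut {A : Type} (w : List A) : Aut A (Fin (w.length + 1)) where
  init := 0
  tr := fun i a j =>
    ∃ h : (i : ℕ) < w.length, a = w.get ⟨(i : ℕ), h⟩ ∧ (j : ℕ) = (i : ℕ) + 1
  acc := {Fin.last w.length}
  alph := {a | a ∈ w}

section Aux

variable {A Q₁ QP : Type} (A₁ : Aut A Q₁) (Ap : Aut A QP)

/-- Combined step of `A₁` and `Ap` on letter `a`: each component moves iff
the letter belongs to its alphabet. -/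
def MStep (a : A) (s s' : Q₁ × QP) : Prop :=
  ((a ∈ A₁.alph ∧ A₁.tr s.1 a s'.1) ∨ (a ∉ A₁.alph ∧ s'.1 = s.1)) ∧
  ((a ∈ Ap.alph ∧ Ap.tr s.2 a s'.2) ∨ (a ∉ Ap.alph ∧ s'.2 = s.2))

/-- A step on a letter outside the (guessed) word alphabet `B`. -/
def EpsStep (B : Set A) (s s' : Q₁ × QP) : Prop :=
  ∃ a, (a ∈ A₁.alph ∨ a ∈ Ap.alph) ∧ a ∉ B ∧ MStep A₁ Ap a s s'

/-- Closure under steps on letters outside `B`. -/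
def cl (B : Set A) (S : Set (Q₁ × QP)) : Set (Q₁ × QP) :=
  {t | ∃ s ∈ S, Relation.ReflTransGen (EpsStep A₁ Ap B) s t}

/-- One step consuming the letter `a` of the word, followed by closure. -/
def stepSet (B : Set A) (a : A) (S : Set (Q₁ × QP)) : Set (Q₁ × QP) :=
  cl A₁ Ap B {t | ∃ s ∈ S, MStep A₁ Ap a s t}

/-- The set of reachable pairs after the word prefix `v`, under the assumption
that the full word alphabet is `B`. -/
def reachF (B : Set A) (v : List A) : Set (Q₁ × QP) :=
  v.foldl (fun S a => stepSet A₁ Ap B a S) (cl A₁ Ap B {(A₁.init, Ap.init)})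

lemma subset_cl (B : Set A) (S : Set (Q₁ × QP)) : S ⊆ cl A₁ Ap B S :=
  fun s hs => ⟨s, hs, Relation.ReflTransGen.refl⟩

lemma cl_cl (B : Set A) (S : Set (Q₁ × QP)) :
    cl A₁ Ap B (cl A₁ Ap B S) = cl A₁ Ap B S := by
  refine subset_antisymm ?_ (subset_cl ..)
  rintro t ⟨s, ⟨s0, h0, r0⟩, r⟩
  exact ⟨s0, h0, r0.trans r⟩

lemma reachF_append (B : Set A) (v : List A) (a : A) :
    reachF A₁ Ap B (v ++ [a]) = stepSet A₁ Ap B a (reachF A₁ Ap B v) := by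
  simp [reachF, List.foldl_append]

lemma cl_reachF (B : Set A) (v : List A) :
    cl A₁ Ap B (reachF A₁ Ap B v) = reachF A₁ Ap B v := by
  rcases List.eq_nil_or_concat v with rfl | ⟨v', a, rfl⟩
  · exact cl_cl ..
  · rw [List.concat_eq_append, reachF_append]; exact cl_cl ..

lemma inner_tr (w : List A) {s1 s1' : Q₁} {i j : Fin (w.length + 1)} {a : A}
    (hm1 : (a ∈ A₁.alph ∧ A₁.tr s1 a s1') ∨ (a ∉ A₁.alph ∧ s1' = s1))
    (hw : (a ∈ w ∧ (wordAut w).tr i a j) ∨ (a ∉ w ∧ j = i))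
    (hM : a ∈ A₁.alph ∪ (wordAut w).alph) :
    AutTrans A₁ (wordAut w) (s1, i) a (s1', j) := by
  rcases hm1 with ⟨h1, t1⟩ | ⟨h1, e1⟩
  · rcases hw with ⟨h2, t2⟩ | ⟨h2, e2⟩
    · exact AutTrans.sync h1 h2 t1 t2
    · subst e2; exact AutTrans.left h1 h2 t1
  · rcases hw with ⟨h2, t2⟩ | ⟨h2, e2⟩
    · subst e1; exact AutTrans.right h2 h1 t2
    · rcases hM with h | h
      · exact absurd h h1
      · exact absurd h h2

lemma triple_tr_iff (w : List A) {s1 s1' : Q₁} {i j : Fin (w.length + 1)}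
    {p p' : QP} {a : A} :
    AutTrans (parAut A₁ (wordAut w)) Ap ((s1, i), p) a ((s1', j), p') ↔
      (MStep A₁ Ap a (s1, p) (s1', p') ∧
       ((a ∈ w ∧ (wordAut w).tr i a j) ∨ (a ∉ w ∧ j = i)) ∧
       (a ∈ A₁.alph ∨ a ∈ Ap.alph ∨ a ∈ w)) := by
  constructor
  · intro h
    cases h with
    | sync h1 h2 t1 t2 =>
      cases t1 with
      | sync g1 g2 u1 u2 =>
        exact ⟨⟨Or.inl ⟨g1, u1⟩, Or.inl ⟨h2, t2⟩⟩, Or.inl ⟨g2, u2⟩, Or.inl g1⟩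
      | left g1 g2 u1 =>
        exact ⟨⟨Or.inl ⟨g1, u1⟩, Or.inl ⟨h2, t2⟩⟩, Or.inr ⟨g2, rfl⟩, Or.inl g1⟩
      | right g1 g2 u1 =>
        exact ⟨⟨Or.inr ⟨g2, rfl⟩, Or.inl ⟨h2, t2⟩⟩, Or.inl ⟨g1, u1⟩,
          Or.inr (Or.inr g1)⟩
    | left h1 h2 t1 =>
      cases t1 with
      | sync g1 g2 u1 u2 =>
        exact ⟨⟨Or.inl ⟨g1, u1⟩, Or.inr ⟨h2, rfl⟩⟩, Or.inl ⟨g2, u2⟩, Or.inl g1⟩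
      | left g1 g2 u1 =>
        exact ⟨⟨Or.inl ⟨g1, u1⟩, Or.inr ⟨h2, rfl⟩⟩, Or.inr ⟨g2, rfl⟩, Or.inl g1⟩
      | right g1 g2 u1 =>
        exact ⟨⟨Or.inr ⟨g2, rfl⟩, Or.inr ⟨h2, rfl⟩⟩, Or.inl ⟨g1, u1⟩,
          Or.inr (Or.inr g1)⟩
    | right h1 h2 t1 =>
      have hn1 : a ∉ A₁.alph := fun hh => h2 (Set.mem_union_left _ hh)
      have hnw : a ∉ w := fun hh => h2 (Set.mem_union_right _ hh)
      exact ⟨⟨Or.inr ⟨hn1, rfl⟩, Or.inl ⟨h1, t1⟩⟩, Or.inr ⟨hnw, rfl⟩,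
        Or.inr (Or.inl h1)⟩
  · rintro ⟨⟨hm1, hm2⟩, hw, hmem⟩
    by_cases hP : a ∈ Ap.alph
    · rcases hm2 with ⟨-, tp⟩ | ⟨hc, -⟩
      · by_cases hM : a ∈ (parAut A₁ (wordAut w)).alph
        · exact AutTrans.sync hM hP (inner_tr A₁ w hm1 hw hM) tp
        · have hn1 : a ∉ A₁.alph := fun hh => hM (Set.mem_union_left _ hh)
          have hnw : a ∉ w := fun hh => hM (Set.mem_union_right _ hh)
          rcases hm1 with ⟨h1, -⟩ | ⟨-, e1⟩
          · exact absurd h1 hn1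
          · rcases hw with ⟨h2, -⟩ | ⟨-, e2⟩
            · exact absurd h2 hnw
            · subst e1; subst e2; exact AutTrans.right hP hM tp
      · exact absurd hP hc
    · have hM : a ∈ (parAut A₁ (wordAut w)).alph := by
        rcases hmem with h | h | h
        · exact Set.mem_union_left _ h
        · exact absurd h hP
        · exact Set.mem_union_right _ h
      rcases hm2 with ⟨h2, -⟩ | ⟨-, e2⟩
      · exact absurd h2 hP
      · subst e2; exact AutTrans.left hM hP (inner_tr A₁ w hm1 hw hM)

lemma step_sound (w : List A) {s1 s1' : Q₁} {i j : Fin (w.length + 1)}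
    {p p' : QP} {a : A}
    (t : AutTrans (parAut A₁ (wordAut w)) Ap ((s1, i), p) a ((s1', j), p'))
    (hs : (s1, p) ∈ reachF A₁ Ap {b | b ∈ w} (w.take i)) :
    (s1', p') ∈ reachF A₁ Ap {b | b ∈ w} (w.take j) := by
  rw [triple_tr_iff] at t
  obtain ⟨hm, hw, hmem⟩ := t
  rcases hw with ⟨haw, h, ha, hj⟩ | ⟨haw, rfl⟩
  · have htake : w.take (j : ℕ) = w.take (i : ℕ) ++ [a] := by
      rw [hj, ← List.take_concat_get' w (i : ℕ) h]
      congr 1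
      simp [ha, List.get_eq_getElem]
    rw [htake, reachF_append]
    exact subset_cl A₁ Ap _ _ ⟨(s1, p), hs, hm⟩
  · rw [← cl_reachF]
    refine ⟨(s1, p), hs, Relation.ReflTransGen.single ⟨a, ?_, haw, hm⟩⟩
    rcases hmem with h | h | h
    · exact Or.inl h
    · exact Or.inr h
    · exact absurd h haw

lemma reach_sound (w : List A) {x : (Q₁ × Fin (w.length + 1)) × QP}
    {u : List A}
    (h : (conjAut (parAut A₁ (wordAut w)) Ap).Reach x u) :
    (x.1.1, x.2) ∈ reachF A₁ Ap {b | b ∈ w} (w.take x.1.2) := by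
  induction h with
  | nil =>
    show (A₁.init, Ap.init) ∈
      reachF A₁ Ap {b | b ∈ w} (w.take ((0 : Fin (w.length + 1)) : ℕ))
    simp only [Fin.val_zero, List.take_zero]
    exact subset_cl A₁ Ap _ _ rfl
  | @snoc q u a q' hr t ih =>
    obtain ⟨⟨s1, i⟩, p⟩ := q
    obtain ⟨⟨s1', j⟩, p'⟩ := q'
    exact step_sound A₁ Ap w t ih

lemma cl_complete (w : List A) {i : Fin (w.length + 1)} {s s' : Q₁ × QP}
    (h : ∃ u, (conjAut (parAut A₁ (wordAut w)) Ap).Reach ((s.1, i), s.2) u)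
    (r : Relation.ReflTransGen (EpsStep A₁ Ap {b | b ∈ w}) s s') :
    ∃ u, (conjAut (parAut A₁ (wordAut w)) Ap).Reach ((s'.1, i), s'.2) u := by
  induction r with
  | refl => exact h
  | @tail b c r e ih =>
    obtain ⟨u, hu⟩ := ih
    obtain ⟨a, hmem, hnB, hm⟩ := e
    refine ⟨u ++ [a], hu.snoc ?_⟩
    refine (triple_tr_iff A₁ Ap w).mpr ⟨hm, Or.inr ⟨hnB, rfl⟩, ?_⟩
    rcases hmem with h' | h'
    · exact Or.inl h'
    · exact Or.inr (Or.inl h')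

lemma reachF_complete (w : List A) :
    ∀ (i : ℕ) (hi : i ≤ w.length), ∀ s ∈ reachF A₁ Ap {b | b ∈ w} (w.take i),
      ∃ u, (conjAut (parAut A₁ (wordAut w)) Ap).Reach
        ((s.1, ⟨i, Nat.lt_succ_of_le hi⟩), s.2) u := by
  intro i
  induction i with
  | zero =>
    intro hi s hs
    rw [List.take_zero] at hs
    obtain ⟨s0, h0, r⟩ := hs
    have h0' : s0 = (A₁.init, Ap.init) := h0
    refine cl_complete A₁ Ap w ⟨[], ?_⟩ r
    subst h0'
    have : (⟨0, Nat.lt_succ_of_le hi⟩ : Fin (w.length + 1)) = 0 := rfl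
    rw [this]
    exact Aut.Reach.nil
  | succ k ih =>
    intro hi s hs
    have hk : k < w.length := hi
    rw [show w.take (k + 1) = w.take k ++ [w[k]] from
      (List.take_concat_get' w k hk).symm, reachF_append] at hs
    obtain ⟨s1, ⟨s0, h0, hm⟩, r⟩ := hs
    obtain ⟨u, hu⟩ := ih (le_of_lt hk) s0 h0
    refine cl_complete A₁ Ap w ⟨u ++ [w[k]], hu.snoc ?_⟩ r
    refine (triple_tr_iff A₁ Ap w).mpr ⟨hm, Or.inl ⟨?_, ⟨hk, ?_, ?_⟩⟩,
      Or.inr (Or.inr ?_)⟩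
    · exact List.getElem_mem hk
    · simp [List.get_eq_getElem]
    · rfl
    · exact List.getElem_mem hk

lemma sat_iff (w : List A) :
    SatAut (parAut A₁ (wordAut w)) Ap ↔
      ∀ s ∈ reachF A₁ Ap {b | b ∈ w} w,
        ¬(s.1 ∈ A₁.acc ∧ s.2 ∉ Ap.acc) := by
  constructor
  · intro hsat s hs hbad
    have hs' : s ∈ reachF A₁ Ap {b | b ∈ w} (w.take w.length) := by
      rwa [List.take_length]
    obtain ⟨u, hu⟩ := reachF_complete A₁ Ap w w.length le_rfl s hs'
    refine hsat u ⟨((s.1, ⟨w.length, Nat.lt_succ_of_le le_rfl⟩), s.2),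
      ⟨⟨hbad.1, ?_⟩, hbad.2⟩, hu⟩
    rfl
  · intro h u hu
    obtain ⟨⟨⟨q1, i⟩, p⟩, hacc, hr⟩ := hu
    obtain ⟨⟨h1, hlast⟩, h2⟩ := hacc
    have hlast' : i = Fin.last w.length := hlast
    have hsnd := reach_sound A₁ Ap w hr
    rw [hlast'] at hsnd
    simp only [Fin.val_last, List.take_length] at hsnd
    exact h (q1, p) hsnd ⟨h1, h2⟩

variable (Sa : Set A)

/-- The DFA recognizing the weakest assumption: tracks the set of letters
seen so far and, for every guess `B` of the final word alphabet, the set of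
reachable pairs. -/
noncomputable def awDFA : DFA A (Option ((Set ↥Sa) × ((Set ↥Sa) → Set (Q₁ × QP)))) where
  step x a := x.bind fun y =>
    if h : a ∈ Sa then
      some (insert (⟨a, h⟩ : ↥Sa) y.1,
        fun B => if (⟨a, h⟩ : ↥Sa) ∈ B then
          stepSet A₁ Ap (Subtype.val '' B) a (y.2 B) else y.2 B)
    else none
  start := some (∅, fun B => cl A₁ Ap (Subtype.val '' B) {(A₁.init, Ap.init)})
  accept := {x | ∃ L f, x = some (L, f) ∧
    ∀ s ∈ f L, ¬(s.1 ∈ A₁.acc ∧ s.2 ∉ Ap.acc)}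

lemma awDFA_eval_none (w : List A) (hw : ¬ ∀ a ∈ w, a ∈ Sa) :
    (awDFA A₁ Ap Sa).eval w = none := by
  induction w using List.reverseRecOn with
  | nil => simp at hw
  | append_singleton v a ih =>
    rw [DFA.eval_append_singleton]
    by_cases hv : ∀ b ∈ v, b ∈ Sa
    · have ha : a ∉ Sa := by
        intro ha
        apply hw
        intro b hb
        rcases List.mem_append.mp hb with h | h
        · exact hv b h
        · rw [List.mem_singleton.mp h]; exact ha
      cases (awDFA A₁ Ap Sa).eval v <;> simp [awDFA, ha]
    · rw [ih hv]; rfl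

lemma awDFA_eval_spec (w : List A) (hw : ∀ a ∈ w, a ∈ Sa) :
    ∃ f, (awDFA A₁ Ap Sa).eval w = some ({x : ↥Sa | (x : A) ∈ w}, f) ∧
      ∀ B : Set ↥Sa, (∀ x : ↥Sa, (x : A) ∈ w → x ∈ B) →
        f B = reachF A₁ Ap (Subtype.val '' B) w := by
  induction w using List.reverseRecOn with
  | nil =>
    refine ⟨fun B => cl A₁ Ap (Subtype.val '' B) {(A₁.init, Ap.init)}, ?_,
      fun B _ => rfl⟩
    have : {x : ↥Sa | (x : A) ∈ ([] : List A)} = (∅ : Set ↥Sa) := by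
      ext x; simp
    rw [DFA.eval_nil, this]
    rfl
  | append_singleton v a ih =>
    have ha : a ∈ Sa := hw a (List.mem_append_right _ (List.mem_singleton.mpr rfl))
    have hv : ∀ b ∈ v, b ∈ Sa := fun b hb => hw b (List.mem_append_left _ hb)
    obtain ⟨f, hev, hf⟩ := ih hv
    rw [DFA.eval_append_singleton, hev]
    refine ⟨fun B => if (⟨a, ha⟩ : ↥Sa) ∈ B then
      stepSet A₁ Ap (Subtype.val '' B) a (f B) else f B, ?_, ?_⟩
    · show (if h : a ∈ Sa then _ else _) = _
      rw [dif_pos ha]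
      refine congrArg some (Prod.ext ?_ rfl)
      show insert (⟨a, ha⟩ : ↥Sa) {x : ↥Sa | (x : A) ∈ v} =
        {x : ↥Sa | (x : A) ∈ v ++ [a]}
      ext x
      simp only [Set.mem_insert_iff, Set.mem_setOf_eq, List.mem_append,
        List.mem_singleton]
      constructor
      · rintro (rfl | h)
        · exact Or.inr rfl
        · exact Or.inl h
      · rintro (h | h)
        · exact Or.inr h
        · exact Or.inl (Subtype.ext h)
    · intro B hB
      have haB : (⟨a, ha⟩ : ↥Sa) ∈ B :=
        hB _ (List.mem_append_right _ (List.mem_singleton.mpr rfl))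
      show (if (⟨a, ha⟩ : ↥Sa) ∈ B then
        stepSet A₁ Ap (Subtype.val '' B) a (f B) else f B) =
        reachF A₁ Ap (Subtype.val '' B) (v ++ [a])
      rw [if_pos haB, hf B (fun x hx => hB x (List.mem_append_left _ hx)),
        reachF_append]

end Aux

/-- let `A₁`, `A₂` and `Ap` be finite-state automata with
`αAp ⊆ αA₁ ∪ αA₂`, where `Ap` is deterministic and complete.  Then the
weakest assumption `L(A_w) = { w ∈ (αA₂)* : A₁ ‖ w ⊨ Ap }` is regular. -/
theorem weakest_assumption_regular_automata
    {A Q₁ Q₂ QP : Type} [Finite Q₁] [Finite Q₂] [Finite QP]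
    (A₁ : Aut A Q₁) (A₂ : Aut A Q₂) (Ap : Aut A QP)
    (h₁ : A₁.WF) (h₂ : A₂.WF) (hp : Ap.WF)
    (hfin₁ : A₁.alph.Finite) (hfin₂ : A₂.alph.Finite) (hfinP : Ap.alph.Finite)
    (halph : Ap.alph ⊆ A₁.alph ∪ A₂.alph)
    (hdetcomp : ∀ q : QP, ∀ a ∈ Ap.alph, ∃! q' : QP, Ap.tr q a q') :
    IsRegularLang {w : List A |
      (∀ a ∈ w, a ∈ A₂.alph) ∧ SatAut (parAut A₁ (wordAut w)) Ap} := by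
  classical
  haveI : Finite ↥A₂.alph := hfin₂.to_subtype
  haveI : Finite (Option ((Set ↥A₂.alph) × ((Set ↥A₂.alph) → Set (Q₁ × QP)))) :=
    Finite.of_equiv _ (Equiv.optionEquivSumPUnit.{0,0} _).symm
  refine ⟨Option ((Set ↥A₂.alph) × ((Set ↥A₂.alph) → Set (Q₁ × QP))),
    Fintype.ofFinite _, awDFA A₁ Ap A₂.alph, fun w => ?_⟩
  rw [DFA.mem_accepts]
  by_cases hw : ∀ a ∈ w, a ∈ A₂.alph
  · obtain ⟨f, hev, hf⟩ := awDFA_eval_spec A₁ Ap A₂.alph w hw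
    rw [hev]
    have himg : Subtype.val '' {x : ↥A₂.alph | (x : A) ∈ w} = {b | b ∈ w} := by
      ext b
      constructor
      · rintro ⟨x, hx, rfl⟩; exact hx
      · intro hb; exact ⟨⟨b, hw b hb⟩, hb, rfl⟩
    have hfL : f {x : ↥A₂.alph | (x : A) ∈ w} = reachF A₁ Ap {b | b ∈ w} w := by
      rw [← himg]; exact hf _ (fun x hx => hx)
    constructor
    · rintro ⟨L', f', heq, hcond⟩
      obtain ⟨hL, hf'⟩ := Prod.mk.injEq .. ▸ Option.some.injEq .. ▸ heq
      refine ⟨hw, (sat_iff A₁ Ap w).mpr ?_⟩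
      rw [← hfL]
      intro s hs
      exact hcond s (by rwa [← hf', ← hL])
    · rintro ⟨-, hsat⟩
      refine ⟨_, _, rfl, ?_⟩
      rw [hfL]
      exact (sat_iff A₁ Ap w).mp hsat
  · rw [awDFA_eval_none A₁ Ap A₂.alph w hw]
    constructor
    · rintro ⟨L, f, h, -⟩
      exact absurd h.symm (Option.some_ne_none _)
    · rintro ⟨h, -⟩
      exact absurd h hw


end AGR
end
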